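/- There exists an injective group homomorphism from the quaternion group Q₈ = ⟨g₁, g₂, g₃ : g₁² = g₂² = g₃, g₃² = 1, g₁⁻¹g₂g₁ = g₂g₃⟩ into the semidirect product G̃ = (ℤ/4ℤ × ℤ/2ℤ) ⋊ ℤ/2ℤ = ⟨y₁, y₂, y₃ : y₁² = y₂² = y₃⁴ = 1, y₂y₃ = y₃y₂, y₁⁻¹y₂y₁ = y₂y₃², y₁⁻¹y₃y₁ = y₃⟩, given on generators by g₁ ↦ y₂y₃, g₂ ↦ y₂y₁, g₃ ↦ y₃². -/

import Mathlib

/-- Generators `g₁, g₂, g₃` of the quaternion group `Q₈`. -/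
inductive QuatGen | g1 | g2 | g3

/-- The relations of the presentation
`Q₈ = ⟨g₁, g₂, g₃ : g₁² = g₂² = g₃, g₃² = 1, g₁⁻¹g₂g₁ = g₂g₃⟩`. -/
def quatRels : Set (FreeGroup QuatGen) :=
  { FreeGroup.of QuatGen.g1 ^ 2 * (FreeGroup.of QuatGen.g3)⁻¹,
    FreeGroup.of QuatGen.g2 ^ 2 * (FreeGroup.of QuatGen.g3)⁻¹,
    FreeGroup.of QuatGen.g3 ^ 2,
    (FreeGroup.of QuatGen.g1)⁻¹ * FreeGroup.of QuatGen.g2 * FreeGroup.of QuatGen.g1 *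
      (FreeGroup.of QuatGen.g2 * FreeGroup.of QuatGen.g3)⁻¹ }

/-- The quaternion group `Q₈ = ⟨g₁, g₂, g₃ : g₁² = g₂² = g₃, g₃² = 1, g₁⁻¹g₂g₁ = g₂g₃⟩`. -/
def Q8 : Type := PresentedGroup quatRels

noncomputable instance : Group Q8 := by unfold Q8; infer_instance

/-- Generators `y₁, y₂, y₃` of `G̃ = (ℤ/4ℤ × ℤ/2ℤ) ⋊ ℤ/2ℤ`. -/
inductive TildeGen | y1 | y2 | y3

/-- The relations of the presentation
`G̃ = (ℤ/4ℤ × ℤ/2ℤ) ⋊ ℤ/2ℤ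
   = ⟨y₁, y₂, y₃ : y₁² = y₂² = y₃⁴ = 1, y₂y₃ = y₃y₂, y₁⁻¹y₂y₁ = y₂y₃², y₁⁻¹y₃y₁ = y₃⟩`. -/
def tildeRels : Set (FreeGroup TildeGen) :=
  { FreeGroup.of TildeGen.y1 ^ 2,
    FreeGroup.of TildeGen.y2 ^ 2,
    FreeGroup.of TildeGen.y3 ^ 4,
    FreeGroup.of TildeGen.y2 * FreeGroup.of TildeGen.y3 *
      (FreeGroup.of TildeGen.y3 * FreeGroup.of TildeGen.y2)⁻¹,
    (FreeGroup.of TildeGen.y1)⁻¹ * FreeGroup.of TildeGen.y2 * FreeGroup.of TildeGen.y1 *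
      (FreeGroup.of TildeGen.y2 * FreeGroup.of TildeGen.y3 ^ 2)⁻¹,
    (FreeGroup.of TildeGen.y1)⁻¹ * FreeGroup.of TildeGen.y3 * FreeGroup.of TildeGen.y1 *
      (FreeGroup.of TildeGen.y3)⁻¹ }

/-- The group `G̃ = (ℤ/4ℤ × ℤ/2ℤ) ⋊ ℤ/2ℤ` of order 16, given by the presentation
`⟨y₁, y₂, y₃ : y₁² = y₂² = y₃⁴ = 1, y₂y₃ = y₃y₂, y₁⁻¹y₂y₁ = y₂y₃², y₁⁻¹y₃y₁ = y₃⟩`. -/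
def GTilde : Type := PresentedGroup tildeRels

noncomputable instance : Group GTilde := by unfold GTilde; infer_instance

/- ### Auxiliary material for the proof -/

lemma mk_rel_eq_one {α : Type*} {rels : Set (FreeGroup α)} {r : FreeGroup α} (h : r ∈ rels) :
    PresentedGroup.mk rels r = 1 :=
  (QuotientGroup.eq_one_iff _).2 (Subgroup.subset_normalClosure h)

/-- A concrete model of `G̃`: triples `(a, b, c)` representing `y₃^a y₂^b y₁^c`. -/
structure Cc where
  a : ZMod 4
  b : ZMod 2
  c : ZMod 2
deriving DecidableEq, Fintype

namespace Cc

instance : Mul Cc :=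
  ⟨fun u v => ⟨u.a + v.a + 2 * (u.c.val : ZMod 4) * (v.b.val : ZMod 4), u.b + v.b, u.c + v.c⟩⟩

instance : One Cc := ⟨⟨0, 0, 0⟩⟩

instance : Inv Cc :=
  ⟨fun u => ⟨-u.a - 2 * (u.b.val : ZMod 4) * (u.c.val : ZMod 4), u.b, u.c⟩⟩

set_option maxHeartbeats 4000000 in
instance : Group Cc :=
  Group.ofLeftAxioms (by decide) (by decide) (by decide)

end Cc

namespace Q8GTildeProof

open PresentedGroup

noncomputable abbrev Y1 : GTilde := PresentedGroup.of TildeGen.y1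
noncomputable abbrev Y2 : GTilde := PresentedGroup.of TildeGen.y2
noncomputable abbrev Y3 : GTilde := PresentedGroup.of TildeGen.y3

lemma hY1 : Y1 * Y1 = 1 := by
  have := mk_rel_eq_one (rels := tildeRels)
    (show FreeGroup.of TildeGen.y1 ^ 2 ∈ tildeRels by simp [tildeRels])
  rw [map_pow, sq] at this
  exact this

lemma hY2 : Y2 * Y2 = 1 := by
  have := mk_rel_eq_one (rels := tildeRels)
    (show FreeGroup.of TildeGen.y2 ^ 2 ∈ tildeRels by simp [tildeRels])
  rw [map_pow, sq] at this
  exact this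

lemma hY3 : Y3 ^ 4 = 1 := by
  have := mk_rel_eq_one (rels := tildeRels)
    (show FreeGroup.of TildeGen.y3 ^ 4 ∈ tildeRels by simp [tildeRels])
  rw [map_pow] at this
  exact this

lemma hY23 : Y2 * Y3 = Y3 * Y2 := by
  have := mk_rel_eq_one (rels := tildeRels)
    (show FreeGroup.of TildeGen.y2 * FreeGroup.of TildeGen.y3 *
      (FreeGroup.of TildeGen.y3 * FreeGroup.of TildeGen.y2)⁻¹ ∈ tildeRels by simp [tildeRels])
  rw [map_mul, map_inv, map_mul, mul_inv_eq_one] at this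
  exact this

lemma hY12 : Y1⁻¹ * Y2 * Y1 = Y2 * Y3 ^ 2 := by
  have := mk_rel_eq_one (rels := tildeRels)
    (show (FreeGroup.of TildeGen.y1)⁻¹ * FreeGroup.of TildeGen.y2 * FreeGroup.of TildeGen.y1 *
      (FreeGroup.of TildeGen.y2 * FreeGroup.of TildeGen.y3 ^ 2)⁻¹ ∈ tildeRels by
        simp [tildeRels])
  simp only [map_mul, map_inv, map_pow] at this
  rwa [mul_inv_eq_one] at this

lemma hY13 : Y1⁻¹ * Y3 * Y1 = Y3 := by
  have := mk_rel_eq_one (rels := tildeRels)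
    (show (FreeGroup.of TildeGen.y1)⁻¹ * FreeGroup.of TildeGen.y3 * FreeGroup.of TildeGen.y1 *
      (FreeGroup.of TildeGen.y3)⁻¹ ∈ tildeRels by simp [tildeRels])
  simp only [map_mul, map_inv] at this
  rwa [mul_inv_eq_one] at this

-- Rewrite system in GTilde: normal form `Y1^c * (Y2^b * Y3^a)`, right-associated.
lemma a1 : Y1 * Y1 = 1 := hY1
lemma a1w (w : GTilde) : Y1 * (Y1 * w) = w := by rw [← mul_assoc, hY1, one_mul]
lemma a2 : Y2 * Y2 = 1 := hY2
lemma a2w (w : GTilde) : Y2 * (Y2 * w) = w := by rw [← mul_assoc, hY2, one_mul]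
lemma a3 : Y3 * (Y3 * (Y3 * Y3)) = 1 := by
  have e : Y3 ^ 4 = Y3 * (Y3 * (Y3 * Y3)) := by
    rw [pow_succ, pow_succ, pow_two, mul_assoc, mul_assoc]
  rw [← e]; exact hY3
lemma a3w (w : GTilde) : Y3 * (Y3 * (Y3 * (Y3 * w))) = w := by
  have h := a3
  calc Y3 * (Y3 * (Y3 * (Y3 * w))) = (Y3 * (Y3 * (Y3 * Y3))) * w := by
        simp [mul_assoc]
    _ = w := by rw [h, one_mul]
lemma b21 : Y2 * Y1 = Y1 * (Y2 * (Y3 * Y3)) := by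
  have h := hY12
  have e : Y2 * Y1 = Y1 * (Y1⁻¹ * Y2 * Y1) := by simp [← mul_assoc]
  rw [e, h, sq]
lemma b21w (w : GTilde) : Y2 * (Y1 * w) = Y1 * (Y2 * (Y3 * (Y3 * w))) := by
  rw [← mul_assoc, b21]; simp [mul_assoc]
lemma b31 : Y3 * Y1 = Y1 * Y3 := by
  have h := hY13
  have e : Y3 * Y1 = Y1 * (Y1⁻¹ * Y3 * Y1) := by simp [← mul_assoc]
  rw [e, h]
lemma b31w (w : GTilde) : Y3 * (Y1 * w) = Y1 * (Y3 * w) := by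
  rw [← mul_assoc, b31, mul_assoc]
lemma b32 : Y3 * Y2 = Y2 * Y3 := hY23.symm
lemma b32w (w : GTilde) : Y3 * (Y2 * w) = Y2 * (Y3 * w) := by
  rw [← mul_assoc, b32, mul_assoc]
lemma i1 : Y1⁻¹ = Y1 := inv_eq_of_mul_eq_one_right hY1
lemma i2 : Y2⁻¹ = Y2 := inv_eq_of_mul_eq_one_right hY2
lemma i3 : Y3⁻¹ = Y3 * (Y3 * Y3) := inv_eq_of_mul_eq_one_right a3

/-- The image of the generators. -/
noncomputable def fgen : QuatGen → GTilde
  | QuatGen.g1 => Y2 * Y3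
  | QuatGen.g2 => Y2 * Y1
  | QuatGen.g3 => Y3 ^ 2

lemma frel : ∀ r ∈ quatRels, FreeGroup.lift fgen r = 1 := by
  intro r hr
  simp only [quatRels, Set.mem_insert_iff, Set.mem_singleton_iff] at hr
  rcases hr with rfl | rfl | rfl | rfl <;>
    simp only [map_mul, map_inv, map_pow, FreeGroup.lift_apply_of, fgen] <;>
    simp [pow_two, mul_inv_rev, mul_assoc, i1, i2, i3,
      a1, a1w, a2, a2w, a3, a3w, b21, b21w, b31, b31w, b32, b32w]

/-- The homomorphism `Q₈ →* G̃`. -/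
noncomputable def fQ : Q8 →* GTilde := PresentedGroup.toGroup frel

lemma fQ_g1 : fQ (PresentedGroup.of QuatGen.g1) = Y2 * Y3 := PresentedGroup.toGroup.of frel
lemma fQ_g2 : fQ (PresentedGroup.of QuatGen.g2) = Y2 * Y1 := PresentedGroup.toGroup.of frel
lemma fQ_g3 : fQ (PresentedGroup.of QuatGen.g3) = Y3 ^ 2 := PresentedGroup.toGroup.of frel

/-- Images of the `TildeGen` generators in the concrete model. -/
def cgen : TildeGen → Cc
  | TildeGen.y1 => ⟨0, 0, 1⟩
  | TildeGen.y2 => ⟨0, 1, 0⟩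
  | TildeGen.y3 => ⟨1, 0, 0⟩

lemma crel : ∀ r ∈ tildeRels, FreeGroup.lift cgen r = 1 := by
  intro r hr
  simp only [tildeRels, Set.mem_insert_iff, Set.mem_singleton_iff] at hr
  rcases hr with rfl | rfl | rfl | rfl | rfl | rfl <;>
    simp only [map_mul, map_inv, map_pow, FreeGroup.lift_apply_of, cgen] <;> decide

/-- The homomorphism `G̃ →* Cc`. -/
noncomputable def pC : GTilde →* Cc := PresentedGroup.toGroup crel

/-- The composite `Q₈ →* Cc`. -/
noncomputable def psi : Q8 →* Cc := pC.comp fQ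

noncomputable abbrev X : Q8 := PresentedGroup.of QuatGen.g1
noncomputable abbrev Z : Q8 := PresentedGroup.of QuatGen.g2
noncomputable abbrev T : Q8 := PresentedGroup.of QuatGen.g3

lemma hX : X * X = T := by
  have := mk_rel_eq_one (rels := quatRels)
    (show FreeGroup.of QuatGen.g1 ^ 2 * (FreeGroup.of QuatGen.g3)⁻¹ ∈ quatRels by
      simp [quatRels])
  rw [map_mul, map_inv, map_pow, mul_inv_eq_one, sq] at this
  exact this

lemma hZ : Z * Z = T := by
  have := mk_rel_eq_one (rels := quatRels)
    (show FreeGroup.of QuatGen.g2 ^ 2 * (FreeGroup.of QuatGen.g3)⁻¹ ∈ quatRels by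
      simp [quatRels])
  rw [map_mul, map_inv, map_pow, mul_inv_eq_one, sq] at this
  exact this

lemma hT : T * T = 1 := by
  have := mk_rel_eq_one (rels := quatRels)
    (show FreeGroup.of QuatGen.g3 ^ 2 ∈ quatRels by simp [quatRels])
  rw [map_pow, sq] at this
  exact this

lemma hC : X⁻¹ * Z * X = Z * T := by
  have := mk_rel_eq_one (rels := quatRels)
    (show (FreeGroup.of QuatGen.g1)⁻¹ * FreeGroup.of QuatGen.g2 * FreeGroup.of QuatGen.g1 *
      (FreeGroup.of QuatGen.g2 * FreeGroup.of QuatGen.g3)⁻¹ ∈ quatRels by simp [quatRels])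
  rw [map_mul, map_inv, map_mul, map_mul, map_inv, mul_inv_eq_one] at this
  exact this

-- normal form rewriting lemmas
lemma nXX : X * X = T := hX
lemma nXXw (w : Q8) : X * (X * w) = T * w := by rw [← mul_assoc, hX]
lemma nZZ : Z * Z = T := hZ
lemma nZZw (w : Q8) : Z * (Z * w) = T * w := by rw [← mul_assoc, hZ]
lemma nTT : T * T = 1 := hT
lemma nTTw (w : Q8) : T * (T * w) = w := by rw [← mul_assoc, hT, one_mul]
lemma nZX : Z * X = X * (Z * T) := by
  have h := hC
  calc Z * X = X * (X⁻¹ * Z * X) := by simp [← mul_assoc]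
    _ = X * (Z * T) := by rw [h]
lemma nZXw (w : Q8) : Z * (X * w) = X * (Z * (T * w)) := by
  rw [← mul_assoc, nZX]; simp [mul_assoc]
lemma nTX : T * X = X * T := by
  rw [← hX, mul_assoc]
lemma nTXw (w : Q8) : T * (X * w) = X * (T * w) := by rw [← mul_assoc, nTX, mul_assoc]
lemma nTZ : T * Z = Z * T := by
  rw [← hZ, mul_assoc]
lemma nTZw (w : Q8) : T * (Z * w) = Z * (T * w) := by rw [← mul_assoc, nTZ, mul_assoc]
lemma iX : X⁻¹ = X * T := by
  apply inv_eq_of_mul_eq_one_right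
  rw [← mul_assoc, hX, hT]
lemma iZ : Z⁻¹ = Z * T := by
  apply inv_eq_of_mul_eq_one_right
  rw [← mul_assoc, hZ, hT]
lemma iT : T⁻¹ = T := inv_eq_of_mul_eq_one_right hT

/-- The eight-element subgroup carrier covering `Q8`. -/
def S : Set Q8 := {1, X, Z, T, X * Z, X * T, Z * T, X * (Z * T)}

lemma mem_S_iff (q : Q8) : q ∈ S ↔ q = 1 ∨ q = X ∨ q = Z ∨ q = T ∨ q = X * Z ∨
    q = X * T ∨ q = Z * T ∨ q = X * (Z * T) := by
  simp [S]

set_option maxHeartbeats 2000000 in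
noncomputable def K : Subgroup Q8 where
  carrier := S
  one_mem' := by simp [S]
  mul_mem' := by
    intro p q hp hq
    rw [mem_S_iff] at hp hq ⊢
    rcases hp with rfl | rfl | rfl | rfl | rfl | rfl | rfl | rfl <;>
      rcases hq with rfl | rfl | rfl | rfl | rfl | rfl | rfl | rfl <;>
      simp [mul_assoc, nXX, nXXw, nZZ, nZZw, nTT, nTTw, nZX, nZXw, nTX, nTXw, nTZ, nTZw]
  inv_mem' := by
    intro p hp
    rw [mem_S_iff] at hp
    rw [mem_S_iff]
    rcases hp with rfl | rfl | rfl | rfl | rfl | rfl | rfl | rfl <;>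
      simp [mul_inv_rev, iX, iZ, iT, mul_assoc,
        nXX, nXXw, nZZ, nZZw, nTT, nTTw, nZX, nZXw, nTX, nTXw, nTZ, nTZw]

lemma mem_S (q : Q8) : q ∈ S := by
  have : q ∈ K := by
    apply PresentedGroup.generated_by quatRels K
    intro j
    have hS : ∀ q : Q8, q ∈ S → q ∈ K := fun q hq => hq
    cases j
    · exact hS X (by rw [mem_S_iff]; tauto)
    · exact hS Z (by rw [mem_S_iff]; tauto)
    · exact hS T (by rw [mem_S_iff]; tauto)
  exact this

lemma pC_of (t : TildeGen) : pC (PresentedGroup.of t) = cgen t :=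
  PresentedGroup.toGroup.of crel

lemma psi_X : psi X = (⟨0, 1, 0⟩ : Cc) * ⟨1, 0, 0⟩ := by
  show pC (fQ X) = _
  rw [fQ_g1, map_mul, pC_of, pC_of]; rfl
lemma psi_Z : psi Z = (⟨0, 1, 0⟩ : Cc) * ⟨0, 0, 1⟩ := by
  show pC (fQ Z) = _
  rw [fQ_g2, map_mul, pC_of, pC_of]; rfl
lemma psi_T : psi T = (⟨1, 0, 0⟩ : Cc) * ⟨1, 0, 0⟩ := by
  show pC (fQ T) = _
  rw [fQ_g3, sq, map_mul, pC_of]; rfl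

lemma fQ_injective : Function.Injective fQ := by
  have hpsi : Function.Injective psi → Function.Injective fQ := by
    intro h a b hab
    exact h (by simp [psi, hab])
  apply hpsi
  intro a b hab
  have ha := mem_S a
  have hb := mem_S b
  rw [mem_S_iff] at ha hb
  rcases ha with rfl | rfl | rfl | rfl | rfl | rfl | rfl | rfl <;>
    rcases hb with rfl | rfl | rfl | rfl | rfl | rfl | rfl | rfl <;>
    simp only [map_mul, map_one, psi_X, psi_Z, psi_T] at hab <;>
    first
      | rfl
      | exact absurd hab (by decide)

end Q8GTildeProof

/-- There exists an injective group homomorphism from the quaternion group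
`Q₈ = ⟨g₁, g₂, g₃ : g₁² = g₂² = g₃, g₃² = 1, g₁⁻¹g₂g₁ = g₂g₃⟩` into the semidirect product
`G̃ = (ℤ/4ℤ × ℤ/2ℤ) ⋊ ℤ/2ℤ
   = ⟨y₁, y₂, y₃ : y₁² = y₂² = y₃⁴ = 1, y₂y₃ = y₃y₂, y₁⁻¹y₂y₁ = y₂y₃², y₁⁻¹y₃y₁ = y₃⟩`,
given on generators by `g₁ ↦ y₂y₃`, `g₂ ↦ y₂y₁`, `g₃ ↦ y₃²`. -/
theorem exists_injective_hom_Q8_to_GTilde :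
    ∃ f : Q8 →* GTilde, Function.Injective f ∧
      f (PresentedGroup.of QuatGen.g1) =
        PresentedGroup.of TildeGen.y2 * PresentedGroup.of TildeGen.y3 ∧
      f (PresentedGroup.of QuatGen.g2) =
        PresentedGroup.of TildeGen.y2 * PresentedGroup.of TildeGen.y1 ∧
      f (PresentedGroup.of QuatGen.g3) = PresentedGroup.of TildeGen.y3 ^ 2 := by
  exact ⟨Q8GTildeProof.fQ, Q8GTildeProof.fQ_injective,
    Q8GTildeProof.fQ_g1, Q8GTildeProof.fQ_g2, Q8GTildeProof.fQ_g3⟩
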